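/- The elements T = (S₁+S₂)/√2 and V = UTU, where U = S₁S₁* − S₂S₂*, are isometries satisfying TT* + VV* = 1, and both are fixed by any *-automorphism σ with σ(S₁)=S₂, σ(S₂)=S₁. -/

import Mathlib

theorem stmt_6 {A : Type*} [NormedRing A] [StarRing A] [CStarRing A]
    [NormedAlgebra ℂ A] [CompleteSpace A] [StarModule ℂ A]
    (S₁ S₂ : A) (h1 : star S₁ * S₁ = 1) (h2 : star S₂ * S₂ = 1)
    (hC : S₁ * star S₁ + S₂ * star S₂ = 1)
    (U T V : A)
    (hU : U = S₁ * star S₁ - S₂ * star S₂)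
    (hT : T = ((Real.sqrt 2 : ℂ))⁻¹ • (S₁ + S₂))
    (hV : V = U * T * U) :
    star T * T = 1 ∧ star V * V = 1 ∧ T * star T + V * star V = 1 ∧
    ∀ σ : A ≃⋆ₐ[ℂ] A, σ S₁ = S₂ → σ S₂ = S₁ → σ T = T ∧ σ V = V := by
  set r : ℂ := ((Real.sqrt 2 : ℂ))⁻¹ with hr
  have hstar_r : star r = r := by
    simp [hr, Complex.star_def, ← Complex.ofReal_inv, Complex.conj_ofReal]
  have hrr : r * r = (2:ℂ)⁻¹ := by
    rw [hr, ← mul_inv]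
    norm_num [← Complex.ofReal_mul, Real.mul_self_sqrt]
  -- orthogonality
  have hP2S2 : (S₂ * star S₂) * S₂ = S₂ := by
    rw [mul_assoc, h2, mul_one]
  have hP1S2 : (S₁ * star S₁) * S₂ = 0 := by
    have h : (S₁ * star S₁) * S₂ + (S₂ * star S₂) * S₂ = S₂ := by
      rw [← add_mul, hC, one_mul]
    rw [hP2S2] at h
    rwa [add_eq_right] at h
  have h12 : star S₁ * S₂ = 0 := by
    have := congrArg (fun x => star S₁ * x) hP1S2
    simpa [← mul_assoc, h1] using this
  have h21 : star S₂ * S₁ = 0 := by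
    have := congrArg star h12
    simpa [star_mul] using this
  have hP1S1 : (S₁ * star S₁) * S₁ = S₁ := by rw [mul_assoc, h1, mul_one]
  have hP2S1 : (S₂ * star S₂) * S₁ = 0 := by
    rw [mul_assoc, h21, mul_zero]
  have hUstar : star U = U := by simp [hU, star_sub, star_mul]
  have hUS1 : U * S₁ = S₁ := by rw [hU, sub_mul, hP1S1, hP2S1, sub_zero]
  have hUS2 : U * S₂ = -S₂ := by rw [hU, sub_mul, hP1S2, hP2S2, zero_sub]
  have hUU : U * U = 1 := by
    have h : U * U = (U * S₁) * star S₁ - (U * S₂) * star S₂ := by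
      nth_rewrite 2 [hU]; noncomm_ring
    rw [h, hUS1, hUS2, neg_mul, sub_neg_eq_add, hC]
  have hstarT : star T = r • (star S₁ + star S₂) := by
    rw [hT, star_smul, hstar_r, star_add]
  have hTT : star T * T = 1 := by
    rw [hstarT, hT, smul_mul_smul_comm, add_mul, mul_add, mul_add, h1, h2, h12, h21]
    simp only [add_zero, zero_add]
    rw [← two_smul ℂ (1:A), smul_smul, hrr]
    norm_num
  have hS1U : star S₁ * U = star S₁ := by
    have := congrArg star hUS1; rw [star_mul, hUstar] at this; exact this
  have hS2U : star S₂ * U = -star S₂ := by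
    have := congrArg star hUS2; rw [star_mul, hUstar, star_neg] at this; exact this
  have hVstarV : star V * V = 1 := by
    rw [hV, star_mul, star_mul, hUstar]
    have h : U * (star T * U) * (U * T * U) = U * (star T * ((U * U) * T)) * U := by
      noncomm_ring
    rw [h, hUU, one_mul, hTT, mul_one, hUU]
  refine ⟨hTT, hVstarV, ?_, ?_⟩
  · -- T T* + V V* = 1
    have hTstarT : T * star T = (r * r) • (S₁ * star S₁ + S₂ * star S₂
        + (S₁ * star S₂ + S₂ * star S₁)) := by
      rw [hstarT, hT, smul_mul_smul_comm, add_mul, mul_add, mul_add]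
      congr 1
      abel
    have hVV : V * star V = U * (T * star T) * U := by
      rw [hV, star_mul, star_mul, hUstar]
      have h : U * T * U * (U * (star T * U)) = U * (T * ((U * U) * star T)) * U := by
        noncomm_ring
      rw [h, hUU, one_mul]
    have hUX : U * (S₁ * star S₂ + S₂ * star S₁) * U
        = -(S₁ * star S₂ + S₂ * star S₁) := by
      have h : U * (S₁ * star S₂ + S₂ * star S₁) * U
          = (U * S₁) * (star S₂ * U) + (U * S₂) * (star S₁ * U) := by noncomm_ring
      rw [h, hUS1, hUS2, hS2U, hS1U]
      noncomm_ring
    have hUXU : U * (S₁ * star S₁ + S₂ * star S₂ + (S₁ * star S₂ + S₂ * star S₁)) * U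
        = 1 - (S₁ * star S₂ + S₂ * star S₁) := by
      have h : U * (S₁ * star S₁ + S₂ * star S₂ + (S₁ * star S₂ + S₂ * star S₁)) * U
          = U * (S₁ * star S₁ + S₂ * star S₂) * U
            + U * (S₁ * star S₂ + S₂ * star S₁) * U := by noncomm_ring
      rw [h, hC, mul_one, hUU, hUX, ← sub_eq_add_neg]
    rw [hTstarT, hVV, hTstarT, mul_smul_comm, smul_mul_assoc, hUXU, ← smul_add]
    rw [show S₁ * star S₁ + S₂ * star S₂ + (S₁ * star S₂ + S₂ * star S₁)
        + (1 - (S₁ * star S₂ + S₂ * star S₁)) = S₁ * star S₁ + S₂ * star S₂ + 1 by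
        noncomm_ring, hC]
    rw [← two_smul ℂ (1:A), smul_smul, hrr]
    norm_num
  · intro σ hσ1 hσ2
    have hσT : σ T = T := by
      rw [hT, map_smul, map_add, hσ1, hσ2, add_comm]
    have hσU : σ U = -U := by
      rw [hU, map_sub, map_mul, map_mul, map_star, map_star, hσ1, hσ2]
      noncomm_ring
    refine ⟨hσT, ?_⟩
    rw [hV, map_mul, map_mul, hσU, hσT]
    noncomm_ring
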